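/- Let K/ℚ be a finite Galois extension with group G, let K' be the fixed field of the commutator subgroup G' of G, and suppose K' ⊆ ℚ(ζ_m) for a positive integer m. Then for every positive integer q, K ∩ ℚ(ζ_{qm}) = K', and [K(ζ_{qm}) : ℚ] = φ(qm)·[K:ℚ]/[K':ℚ]. -/

import Mathlib

open IntermediateField

/-- The cyclotomic field `ℚ(ζ_q)` inside `ℂ`, generated by `e^{2πi/q}`. -/
noncomputable def cycloField (q : ℕ) : IntermediateField ℚ ℂ :=
  IntermediateField.adjoin ℚ {Complex.exp (2 * Real.pi * Complex.I / q)}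

section
attribute [local instance 2000] IntermediateField.algebra'

set_option synthInstance.maxHeartbeats 2000000
set_option maxHeartbeats 4000000

lemma cycloField_mono {a b : ℕ} (ha : a ≠ 0) (hb : b ≠ 0) :
    cycloField b ≤ cycloField (a * b) := by
  have h1 : Complex.exp (2 * Real.pi * Complex.I / (a * b : ℕ)) ^ a
      = Complex.exp (2 * Real.pi * Complex.I / (b : ℕ)) := by
    rw [← Complex.exp_nat_mul]
    congr 1
    have ha' : (a : ℂ) ≠ 0 := Nat.cast_ne_zero.2 ha
    have hb' : (b : ℂ) ≠ 0 := Nat.cast_ne_zero.2 hb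
    push_cast
    field_simp
  have h2 : Complex.exp (2 * Real.pi * Complex.I / ((a * b : ℕ) : ℂ)) ∈ cycloField (a * b) :=
    subset_adjoin ℚ _ rfl
  have h3 : Complex.exp (2 * Real.pi * Complex.I / ((b : ℕ) : ℂ)) ∈ cycloField (a * b) := by
    rw [← h1]; exact pow_mem h2 a
  rw [cycloField, adjoin_le_iff]
  intro x hx
  rw [Set.mem_singleton_iff] at hx
  subst hx
  exact h3

/-- The copy of `E` (with `E ≤ M`) inside `M`, as an `AlgEquiv`. -/
noncomputable def restrictIso {M E : IntermediateField ℚ ℂ} (hE : E ≤ M) :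
    ↥(IntermediateField.comap M.val E) ≃ₐ[ℚ] ↥E where
  toFun x := ⟨M.val x, x.2⟩
  invFun y := ⟨⟨(y : ℂ), hE y.2⟩, y.2⟩
  left_inv _ := rfl
  right_inv _ := rfl
  map_mul' _ _ := rfl
  map_add' _ _ := rfl
  commutes' _ := rfl

lemma restrictIso_coe {M E : IntermediateField ℚ ℂ} (hE : E ≤ M)
    (x : ↥(IntermediateField.comap M.val E)) :
    ((restrictIso hE x : ↥E) : ℂ) = ((x : ↥M) : ℂ) := rfl

lemma key_commute {M E : IntermediateField ℚ ℂ} (hE : E ≤ M)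
    [Normal ℚ ↥(IntermediateField.comap M.val E)]
    (σ : ↥M ≃ₐ[ℚ] ↥M) (y : ↥(IntermediateField.comap M.val E)) :
    ((AlgEquiv.restrictNormalHom ↥(IntermediateField.comap M.val E) σ y : ↥M))
      = σ (y : ↥M) :=
  AlgEquiv.restrictNormalHom_apply _ σ y

lemma lift_comap {M E : IntermediateField ℚ ℂ} (hE : E ≤ M) :
    IntermediateField.lift (IntermediateField.comap M.val E) = E := by
  ext z
  constructor
  · rintro ⟨y, hy, rfl⟩
    exact hy
  · intro hz
    exact ⟨⟨z, hE hz⟩, hz, rfl⟩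

theorem stmt11_aux (K : IntermediateField ℚ ℂ) [FiniteDimensional ℚ K] [IsGalois ℚ K]
    (m : ℕ) (hm : 0 < m)
    (hsub : IntermediateField.lift
        (IntermediateField.fixedField (commutator (↥K ≃ₐ[ℚ] ↥K))) ≤ cycloField m) :
    ∀ q : ℕ, 0 < q →
      K ⊓ cycloField (q * m)
          = IntermediateField.lift
              (IntermediateField.fixedField (commutator (↥K ≃ₐ[ℚ] ↥K))) ∧
        Module.finrank ℚ ↥(K ⊔ cycloField (q * m)) *
            Module.finrank ℚ
              ↥(IntermediateField.lift
                (IntermediateField.fixedField (commutator (↥K ≃ₐ[ℚ] ↥K))))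
          = Nat.totient (q * m) * Module.finrank ℚ ↥K := by
  intro q hq
  classical
  set F' : IntermediateField ℚ ↥K :=
    IntermediateField.fixedField (commutator (↥K ≃ₐ[ℚ] ↥K)) with hF'
  set K' : IntermediateField ℚ ℂ := IntermediateField.lift F' with hK'
  have hn : q * m ≠ 0 := Nat.mul_ne_zero hq.ne' hm.ne'
  have npos : 0 < q * m := Nat.pos_of_ne_zero hn
  set L : IntermediateField ℚ ℂ := cycloField (q * m) with hL
  -- cyclotomic instances on L
  have hζ : IsPrimitiveRoot (Complex.exp (2 * Real.pi * Complex.I / (q * m : ℕ))) (q * m) :=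
    Complex.isPrimitiveRoot_exp (q * m) hn
  set n' : ℕ+ := ⟨q * m, npos⟩ with hn'
  have hζ' : IsPrimitiveRoot (Complex.exp (2 * Real.pi * Complex.I / (q * m : ℕ))) (n' : ℕ) := hζ
  haveI hcyc : IsCyclotomicExtension {(n' : ℕ)} ℚ ↥L := by
    have hint : IsIntegral ℚ (Complex.exp (2 * Real.pi * Complex.I / (q * m : ℕ))) := by
      refine IsIntegral.of_pow npos ?_
      rw [hζ.pow_eq_one]
      exact isIntegral_one
    haveI : NeZero (n' : ℕ) := ⟨n'.ne_zero⟩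
    haveI hsalg := IsPrimitiveRoot.adjoin_isCyclotomicExtension ℚ hζ'
    have heq : (IntermediateField.adjoin ℚ
          ({Complex.exp (2 * Real.pi * Complex.I / (q * m : ℕ))} : Set ℂ)).toSubalgebra
        = Algebra.adjoin ℚ {Complex.exp (2 * Real.pi * Complex.I / (q * m : ℕ))} :=
      IntermediateField.adjoin_simple_toSubalgebra_of_isAlgebraic hint.isAlgebraic
    exact IsCyclotomicExtension.equiv (h := hsalg) {(n' : ℕ)} ℚ _ (Subalgebra.equivOfEq _ _ heq.symm)
  haveI : FiniteDimensional ℚ ↥L := IsCyclotomicExtension.finiteDimensional {(n' : ℕ)} ℚ ↥L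
  haveI : IsGalois ℚ ↥L := IsCyclotomicExtension.isGalois {(n' : ℕ)} ℚ ↥L
  have hfinL : Module.finrank ℚ ↥L = Nat.totient (q * m) :=
    @IsCyclotomicExtension.finrank (n' : ℕ) ⟨n'.ne_zero⟩ ℚ ↥L _ _ _ _ hcyc
      (Polynomial.cyclotomic.irreducible_rat npos)
  have hcommL : ∀ a b : (↥L ≃ₐ[ℚ] ↥L), a * b = b * a := by
    haveI := IsCyclotomicExtension.isMulCommutative {(n' : ℕ)} ℚ ↥L
    exact fun a b => mul_comm' a b
  -- the compositum M
  set M : IntermediateField ℚ ℂ := K ⊔ L with hM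
  haveI : FiniteDimensional ℚ ↥M := IntermediateField.finiteDimensional_sup K L
  haveI : IsGalois ℚ ↥M := ⟨⟩
  have hKM : K ≤ M := le_sup_left
  have hLM : L ≤ M := le_sup_right
  set K₁ : IntermediateField ℚ ↥M := IntermediateField.comap M.val K with hK₁
  set L₁ : IntermediateField ℚ ↥M := IntermediateField.comap M.val L with hL₁
  let eK : ↥K₁ ≃ₐ[ℚ] ↥K := restrictIso hKM
  let eL : ↥L₁ ≃ₐ[ℚ] ↥L := restrictIso hLM
  haveI : Normal ℚ ↥K₁ := Normal.of_algEquiv eK.symm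
  haveI : Normal ℚ ↥L₁ := Normal.of_algEquiv eL.symm
  -- restriction homomorphisms
  set f : (↥M ≃ₐ[ℚ] ↥M) →* (↥K ≃ₐ[ℚ] ↥K) :=
    (AlgEquiv.autCongr eK).toMonoidHom.comp (AlgEquiv.restrictNormalHom ↥K₁) with hf
  set g : (↥M ≃ₐ[ℚ] ↥M) →* (↥L ≃ₐ[ℚ] ↥L) :=
    (AlgEquiv.autCongr eL).toMonoidHom.comp (AlgEquiv.restrictNormalHom ↥L₁) with hg
  have hf_surj : Function.Surjective f :=
    (AlgEquiv.autCongr eK).surjective.comp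
      (AlgEquiv.restrictNormalHom_surjective (↥M))
  have hfval : ∀ (σ : ↥M ≃ₐ[ℚ] ↥M) (x : ↥M) (hx : (x : ℂ) ∈ K),
      ((f σ ⟨(x : ℂ), hx⟩ : ↥K) : ℂ) = ((σ x : ↥M) : ℂ) := by
    intro σ x hx
    exact congrArg Subtype.val (key_commute hKM σ ⟨x, hx⟩)
  have hgval : ∀ (σ : ↥M ≃ₐ[ℚ] ↥M) (x : ↥M) (hx : (x : ℂ) ∈ L),
      ((g σ ⟨(x : ℂ), hx⟩ : ↥L) : ℂ) = ((σ x : ↥M) : ℂ) := by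
    intro σ x hx
    exact congrArg Subtype.val (key_commute hLM σ ⟨x, hx⟩)
  -- commutator of Gal(M) is in the kernel of g
  have hker : commutator (↥M ≃ₐ[ℚ] ↥M) ≤ g.ker := by
    rw [commutator_def]
    refine Subgroup.commutator_le.2 fun a _ b _ => ?_
    rw [MonoidHom.mem_ker, map_commutatorElement, commutatorElement_eq_one_iff_mul_comm]
    exact hcommL _ _
  -- elements of ker g fix L pointwise
  have hker_fix : ∀ τ : ↥M ≃ₐ[ℚ] ↥M, τ ∈ g.ker → ∀ (x : ↥M), (x : ℂ) ∈ L → τ x = x := by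
    intro τ hτ x hx
    have h := hgval τ x hx
    rw [MonoidHom.mem_ker.1 hτ] at h
    exact Subtype.ext h.symm
  -- commutator of Gal(K) is the image of the commutator of Gal(M)
  have hcommap : commutator (↥K ≃ₐ[ℚ] ↥K)
      = Subgroup.map f (commutator (↥M ≃ₐ[ℚ] ↥M)) := by
    rw [commutator_def, commutator_def, Subgroup.map_commutator,
      Subgroup.map_top_of_surjective f hf_surj]
  -- PART 1 :  K ⊓ L = K'
  have hcm : cycloField m ≤ L := cycloField_mono hq.ne' hm.ne'
  have hK'L : K' ≤ L := hsub.trans hcm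
  have hK'K : K' ≤ K := IntermediateField.lift_le _
  have h1 : K ⊓ L = K' := by
    refine le_antisymm ?_ (le_inf hK'K hK'L)
    intro x hx
    have hxK : x ∈ K := hx.1
    have hxL : x ∈ L := hx.2
    have hmem : (⟨x, hxK⟩ : ↥K) ∈ F' := by
      rintro ⟨σ, hσ⟩
      rw [hcommap] at hσ
      obtain ⟨τ, hτ, rfl⟩ := hσ
      show f τ ⟨x, hxK⟩ = ⟨x, hxK⟩
      have hfix : τ (⟨x, hKM hxK⟩ : ↥M) = ⟨x, hKM hxK⟩ :=
        hker_fix τ (hker hτ) ⟨x, hKM hxK⟩ hxL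
      apply Subtype.ext
      have := hfval τ ⟨x, hKM hxK⟩ hxK
      rw [hfix] at this
      exact this
    exact (IntermediateField.mem_lift (⟨x, hxK⟩ : ↥K)).2 hmem
  -- PART 2 : degrees
  -- kernel of g is the fixing subgroup of L₁
  have hBfix : IntermediateField.fixingSubgroup L₁ = g.ker := by
    ext τ
    rw [IntermediateField.mem_fixingSubgroup_iff]
    constructor
    · intro hfix
      rw [MonoidHom.mem_ker]
      apply AlgEquiv.ext
      intro z
      apply Subtype.ext
      have h := hgval τ ⟨(z : ℂ), hLM z.2⟩ z.2
      rw [hfix ⟨(z : ℂ), hLM z.2⟩ z.2] at h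
      exact h
    · intro hτ y hy
      exact hker_fix τ hτ y hy
  have hBffix : IntermediateField.fixedField g.ker = L₁ := by
    rw [← hBfix, IsGalois.fixedField_fixingSubgroup L₁]
  -- [M : L₁] = #(ker g)
  have hcardB : Module.finrank ↥L₁ ↥M = Nat.card g.ker := by
    have hx := IntermediateField.finrank_fixedField_eq_card (E := ↥M) g.ker
    rw [← hBffix, hx]
  have htower : Module.finrank ℚ ↥L₁ * Module.finrank ↥L₁ ↥M = Module.finrank ℚ ↥M :=
    Module.finrank_mul_finrank ℚ ↥L₁ ↥M
  have hL₁rank : Module.finrank ℚ ↥L₁ = Module.finrank ℚ ↥L := eL.toLinearEquiv.finrank_eq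
  -- f is injective on ker g
  have hsuptop : K₁ ⊔ L₁ = ⊤ := by
    apply IntermediateField.lift_injective M
    rw [IntermediateField.lift_top]
    show IntermediateField.map M.val (K₁ ⊔ L₁) = M
    rw [IntermediateField.map_sup]
    show IntermediateField.lift K₁ ⊔ IntermediateField.lift L₁ = M
    rw [lift_comap hKM, lift_comap hLM]
  have hker_fixK : ∀ τ : ↥M ≃ₐ[ℚ] ↥M, f τ = 1 → ∀ (x : ↥M), (x : ℂ) ∈ K → τ x = x := by
    intro τ hτ x hx
    have h := hfval τ x hx
    rw [hτ] at h
    exact Subtype.ext h.symm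
  have hinj : ∀ τ ∈ g.ker, f τ = 1 → τ = 1 := by
    intro τ hτg hτf
    have hKfix : K₁ ≤ IntermediateField.fixedField (Subgroup.zpowers τ) := by
      rw [IntermediateField.le_iff_le]
      rw [Subgroup.zpowers_le]
      intro y
      exact hker_fixK τ hτf y y.2
    have hLfix : L₁ ≤ IntermediateField.fixedField (Subgroup.zpowers τ) := by
      rw [IntermediateField.le_iff_le]
      rw [Subgroup.zpowers_le]
      rw [hBfix]
      exact hτg
    have htop : (⊤ : IntermediateField ℚ ↥M)
        ≤ IntermediateField.fixedField (Subgroup.zpowers τ) := by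
      rw [← hsuptop]; exact sup_le hKfix hLfix
    apply AlgEquiv.ext
    intro x
    exact htop (IntermediateField.mem_top (x := x)) ⟨τ, Subgroup.mem_zpowers τ⟩
  set r : g.ker →* (↥K ≃ₐ[ℚ] ↥K) := f.comp g.ker.subtype with hr
  have hrinj : Function.Injective r := by
    rw [injective_iff_map_eq_one]
    intro τ hτ
    exact Subtype.ext (hinj τ.1 τ.2 hτ)
  set H : Subgroup (↥K ≃ₐ[ℚ] ↥K) := r.range with hH
  have hcard_eq : Nat.card g.ker = Nat.card H :=
    Nat.card_congr (MonoidHom.ofInjective hrinj).toEquiv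
  -- the fixed field of H is F'
  have hcomapK' : IntermediateField.comap K.val K' = F' := by
    ext y
    exact IntermediateField.mem_lift y
  have hfixH : IntermediateField.fixedField H = F' := by
    rw [← hcomapK', ← h1]
    ext y
    constructor
    · intro hy
      refine ⟨y.2, ?_⟩
      have hyM : (⟨(y : ℂ), hKM y.2⟩ : ↥M) ∈ L₁ := by
        rw [← hBffix]
        rintro ⟨τ, hτ⟩
        show τ _ = _
        have h := hfval τ ⟨(y : ℂ), hKM y.2⟩ y.2
        have hfτ : f τ ⟨(y : ℂ), y.2⟩ = ⟨(y : ℂ), y.2⟩ := by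
          have : f τ ∈ H := ⟨⟨τ, hτ⟩, rfl⟩
          exact hy ⟨f τ, this⟩
        apply Subtype.ext
        rw [hfτ] at h
        exact h.symm
      exact hyM
    · rintro ⟨hyK, hyL⟩ ⟨h, hh⟩
      obtain ⟨⟨τ, hτker⟩, rfl⟩ := hh
      show f τ y = y
      have hfix : τ (⟨(y : ℂ), hKM y.2⟩ : ↥M) = ⟨(y : ℂ), hKM y.2⟩ :=
        hker_fix τ hτker _ hyL
      apply Subtype.ext
      have h := hfval τ ⟨(y : ℂ), hKM y.2⟩ y.2
      rw [hfix] at h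
      exact h
  have hcardH : Module.finrank ↥F' ↥K = Nat.card H := by
    have hx := IntermediateField.finrank_fixedField_eq_card (E := ↥K) H
    rw [← hfixH, hx, Nat.card_eq_fintype_card]
  have htowerK : Module.finrank ℚ ↥F' * Module.finrank ↥F' ↥K = Module.finrank ℚ ↥K :=
    Module.finrank_mul_finrank ℚ ↥F' ↥K
  have hK'F : Module.finrank ℚ ↥K' = Module.finrank ℚ ↥F' :=
    ((IntermediateField.liftAlgEquiv F').toLinearEquiv.finrank_eq).symm
  refine ⟨h1, ?_⟩
  show Module.finrank ℚ ↥M * Module.finrank ℚ ↥K' = Nat.totient (q * m) * Module.finrank ℚ ↥K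
  rw [hK'F, ← htower, hL₁rank, hfinL, hcardB, hcard_eq, ← hcardH, ← htowerK]
  ring

end

/-- Let `K/ℚ` be finite Galois with group `G`, let `K'` be the fixed
field of the commutator subgroup `G'`, and suppose `K' ⊆ ℚ(ζ_m)`.  Then for every
positive integer `q`, `K ∩ ℚ(ζ_{qm}) = K'` and
`[K(ζ_{qm}) : ℚ]·[K' : ℚ] = φ(qm)·[K : ℚ]`. -/
theorem stmt11 (K : IntermediateField ℚ ℂ) [FiniteDimensional ℚ K] [IsGalois ℚ K]
    (m : ℕ) (hm : 0 < m)
    (hsub : IntermediateField.lift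
        (IntermediateField.fixedField (commutator (↥K ≃ₐ[ℚ] ↥K))) ≤ cycloField m) :
    ∀ q : ℕ, 0 < q →
      K ⊓ cycloField (q * m)
          = IntermediateField.lift
              (IntermediateField.fixedField (commutator (↥K ≃ₐ[ℚ] ↥K))) ∧
        Module.finrank ℚ ↥(K ⊔ cycloField (q * m)) *
            Module.finrank ℚ
              ↥(IntermediateField.lift
                (IntermediateField.fixedField (commutator (↥K ≃ₐ[ℚ] ↥K))))
          = Nat.totient (q * m) * Module.finrank ℚ ↥K := by
  exact @stmt11_aux K ‹_› ‹_› m hm hsub
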